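/- (Cantor, generating-function form) Let N = {1,…,n} be a set of players with integer weights satisfying 1 ≤ w_ℓ for all ℓ, let q be a quota with 1 ≤ q ≤ w(N), and let p ∈ N satisfy w_p ≤ q. Then the number of permutations π of N for which there exists k with w(S_{k−1}(π)) < q ≤ w(S_k(π)) and π_k = p equals Σ_{k=0}^{n−1} k! · (n − 1 − k)! · Σ_{j=q−w_p}^{q−1} [Y^k X^j] f_p, where [Y^k X^j] f_p denotes the coefficient of Y^k X^j in the two-variable polynomial f_p = ∏_{ℓ∈N\{p}} (1 + Y·X^{w_ℓ}). -/

import Mathlib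

open Finset Polynomial

section Aux

variable {α : Type*} [Fintype α] [DecidableEq α]

/-- The number of `i : Fin n` with `↑i < k` is `k`, when `k ≤ n`. -/
lemma card_filter_val_lt (n k : ℕ) (hk : k ≤ n) :
    ((Finset.univ : Finset (Fin n)).filter (fun i : Fin n => (i : ℕ) < k)).card = k := by
  have h : ((Finset.univ : Finset (Fin n)).filter (fun i : Fin n => (i : ℕ) < k)).image Fin.val
      = Finset.range k := by
    ext m
    simp only [Finset.mem_image, Finset.mem_filter, Finset.mem_univ, true_and,
      Finset.mem_range]
    constructor
    · rintro ⟨i, hi, rfl⟩; exact hi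
    · intro hm; exact ⟨⟨m, lt_of_lt_of_le hm hk⟩, hm, rfl⟩
  have hinj : Set.InjOn Fin.val
      (((Finset.univ : Finset (Fin n)).filter (fun i : Fin n => (i : ℕ) < k)) : Set (Fin n)) :=
    fun a _ b _ hab => Fin.ext hab
  rw [← Finset.card_image_of_injOn hinj, h, Finset.card_range]

/-- The number of permutations sending `a` to `b` is `(card α - 1)!`. -/
lemma card_perm_fix (a b : α) :
    (Finset.univ.filter (fun π : Equiv.Perm α => π a = b)).card
      = (Fintype.card α - 1).factorial := by
  have key : ∀ b c : α,
      (Finset.univ.filter (fun π : Equiv.Perm α => π a = b)).card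
        = (Finset.univ.filter (fun π : Equiv.Perm α => π a = c)).card := by
    intro b c
    apply Finset.card_bij' (fun π _ => Equiv.swap b c * π) (fun π _ => Equiv.swap b c * π)
    · intro π hπ
      simp only [Finset.mem_filter, Finset.mem_univ, true_and] at hπ ⊢
      simp [Equiv.Perm.mul_apply, hπ]
    · intro π hπ
      simp only [Finset.mem_filter, Finset.mem_univ, true_and] at hπ ⊢
      simp [Equiv.Perm.mul_apply, hπ]
    · intro π _; rw [← mul_assoc, Equiv.swap_mul_self, one_mul]
    · intro π _; rw [← mul_assoc, Equiv.swap_mul_self, one_mul]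
  have hcard : (Finset.univ : Finset (Equiv.Perm α)).card
      = ∑ c : α, (Finset.univ.filter (fun π : Equiv.Perm α => π a = c)).card :=
    Finset.card_eq_sum_card_fiberwise (fun π _ => Finset.mem_univ (π a))
  have hconst : ∀ c : α,
      (Finset.univ.filter (fun π : Equiv.Perm α => π a = c)).card
        = (Finset.univ.filter (fun π : Equiv.Perm α => π a = b)).card :=
    fun c => key c b
  have hn : 0 < Fintype.card α := Fintype.card_pos_iff.mpr ⟨a⟩
  have hfac : (Fintype.card α).factorial
      = Fintype.card α * (Fintype.card α - 1).factorial :=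
    (Nat.mul_factorial_pred hn.ne').symm
  have hperm : (Fintype.card α).factorial
      = Fintype.card α * (Finset.univ.filter (fun π : Equiv.Perm α => π a = b)).card := by
    rw [← Fintype.card_perm, ← Finset.card_univ, hcard,
      Finset.sum_congr rfl (fun c _ => hconst c), Finset.sum_const, Finset.card_univ,
      smul_eq_mul]
  exact (Nat.eq_of_mul_eq_mul_left hn (hfac.symm.trans hperm)).symm

/-- Given `p ∉ S`, `p ∉ S'`, and `S.card = S'.card`, there is a permutation fixing `p`
and mapping `S` onto `S'`. -/
lemma exists_perm_fix_map (p : α) (S S' : Finset α) (hpS : p ∉ S) (hpS' : p ∉ S')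
    (hcard : S.card = S'.card) : ∃ e : Equiv.Perm α, e p = p ∧ S.image e = S' := by
  have h1 : Fintype.card {x // x ∈ S} = Fintype.card {x // x ∈ S'} := by
    simp [Fintype.card_coe, hcard]
  have h2 : Fintype.card {x // ¬ x ∈ S} = Fintype.card {x // ¬ x ∈ S'} := by
    rw [Fintype.card_subtype_compl, Fintype.card_subtype_compl]
    simp [Fintype.card_coe, hcard]
  obtain ⟨e₁⟩ := Fintype.card_eq.mp h1
  obtain ⟨e₂⟩ := Fintype.card_eq.mp h2
  set e₀ : Equiv.Perm α := Equiv.subtypeCongr e₁ e₂ with he₀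
  have he₀S : ∀ x ∈ S, e₀ x ∈ S' := by
    intro x hx
    have : e₀ x = (e₁ ⟨x, hx⟩ : α) := by
      simp [he₀, Equiv.subtypeCongr, hx]
    rw [this]; exact (e₁ ⟨x, hx⟩).2
  set e : Equiv.Perm α := Equiv.swap (e₀ p) p * e₀ with he
  have hep : e p = p := by
    simp [he, Equiv.Perm.mul_apply, Equiv.swap_apply_left]
  have heS : ∀ x ∈ S, e x ∈ S' := by
    intro x hx
    have h3 : e₀ x ∈ S' := he₀S x hx
    have h4 : e₀ x ≠ e₀ p := fun h => hpS (by rwa [e₀.injective h] at hx)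
    have h5 : e₀ x ≠ p := fun h => hpS' (h ▸ h3)
    simp only [he, Equiv.Perm.mul_apply, Equiv.swap_apply_of_ne_of_ne h4 h5]
    exact h3
  refine ⟨e, hep, ?_⟩
  apply Finset.eq_of_subset_of_card_le
  · intro y hy
    obtain ⟨x, hx, rfl⟩ := Finset.mem_image.mp hy
    exact heS x hx
  · rw [Finset.card_image_of_injective _ e.injective, hcard]

end Aux

section FiberCount

variable {n : ℕ}

/-- Number of permutations `π` of `Fin n` with `π ⟨k, _⟩ = p` and mapping the first `k`
positions onto a fixed set `S` of size `k` avoiding `p`: it is `k! * (n-1-k)!`. -/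
lemma fiber_count (p : Fin n) (S : Finset (Fin n)) (hS : S ⊆ Finset.univ.erase p)
    (hlt : S.card < n) :
    (Finset.univ.filter (fun π : Equiv.Perm (Fin n) => π ⟨S.card, hlt⟩ = p ∧
        ((Finset.univ : Finset (Fin n)).filter (fun i : Fin n => (i : ℕ) < S.card)).image π = S)).card
      = S.card.factorial * (n - 1 - S.card).factorial := by
  classical
  set k := S.card with hk
  set t : Fin n := ⟨k, hlt⟩ with ht
  set A : Finset (Fin n) := Finset.univ.filter (fun i : Fin n => (i : ℕ) < k) with hA
  have hAcard : A.card = k := card_filter_val_lt n k hlt.le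
  have htA : t ∉ A := by simp [hA, ht]
  have hkn1 : k ≤ n - 1 := by
    calc k ≤ (Finset.univ.erase p).card := Finset.card_le_card hS
    _ = n - 1 := by rw [Finset.card_erase_of_mem (Finset.mem_univ p), Finset.card_univ,
        Fintype.card_fin]
  set 𝒮 : Finset (Finset (Fin n)) := (Finset.univ.erase p).powersetCard k with h𝒮
  have hS𝒮 : S ∈ 𝒮 := by
    rw [h𝒮, Finset.mem_powersetCard]; exact ⟨hS, rfl⟩
  -- each fiber has the same cardinality
  have hfib : ∀ S' ∈ 𝒮,
      (Finset.univ.filter (fun π : Equiv.Perm (Fin n) => π t = p ∧ A.image π = S')).card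
        = (Finset.univ.filter (fun π : Equiv.Perm (Fin n) => π t = p ∧ A.image π = S)).card := by
    intro S' hS'
    rw [Finset.mem_powersetCard] at hS'
    have hpS : p ∉ S := fun h => (Finset.mem_erase.mp (hS h)).1 rfl
    have hpS' : p ∉ S' := fun h => (Finset.mem_erase.mp (hS'.1 h)).1 rfl
    obtain ⟨e, hep, heS⟩ := exists_perm_fix_map p S' S hpS' hpS (hS'.2.trans hk.symm)
    apply Finset.card_bij' (fun π _ => e * π) (fun π _ => e⁻¹ * π)
    · intro π hπ
      simp only [Finset.mem_filter, Finset.mem_univ, true_and] at hπ ⊢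
      constructor
      · rw [Equiv.Perm.mul_apply, hπ.1, hep]
      · have : A.image ⇑(e * π) = (A.image ⇑π).image ⇑e := by
          rw [Finset.image_image]; rfl
        rw [this, hπ.2, heS]
    · intro π hπ
      simp only [Finset.mem_filter, Finset.mem_univ, true_and] at hπ ⊢
      have hep' : e⁻¹ p = p := e.injective (by rw [← Equiv.Perm.mul_apply, mul_inv_cancel, Equiv.Perm.one_apply, hep])
      constructor
      · rw [Equiv.Perm.mul_apply, hπ.1, hep']
      · have h1 : A.image ⇑(e⁻¹ * π) = (A.image ⇑π).image ⇑e⁻¹ := by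
          rw [Finset.image_image]; rfl
        rw [h1, hπ.2, ← heS, Finset.image_image]
        simp only [Function.comp_def, ← Equiv.Perm.mul_apply, inv_mul_cancel, Equiv.Perm.one_apply, Finset.image_id']
    · intro π _; rw [← mul_assoc, inv_mul_cancel, one_mul]
    · intro π _; rw [← mul_assoc, mul_inv_cancel, one_mul]
  -- sum of fibers equals the count of permutations with π t = p
  have hsum : (Finset.univ.filter (fun π : Equiv.Perm (Fin n) => π t = p)).card
      = ∑ S' ∈ 𝒮, (Finset.univ.filter
          (fun π : Equiv.Perm (Fin n) => π t = p ∧ A.image π = S')).card := by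
    have hmaps : ∀ π ∈ Finset.univ.filter (fun π : Equiv.Perm (Fin n) => π t = p),
        A.image ⇑π ∈ 𝒮 := by
      intro π hπ
      rw [Finset.mem_filter] at hπ
      rw [h𝒮, Finset.mem_powersetCard]
      constructor
      · intro x hx
        obtain ⟨i, hi, rfl⟩ := Finset.mem_image.mp hx
        refine Finset.mem_erase.mpr ⟨?_, Finset.mem_univ _⟩
        intro hcon
        have : i = t := π.injective (hcon.trans hπ.2.symm)
        exact htA (this ▸ hi)
      · rw [Finset.card_image_of_injective _ π.injective, hAcard]
    rw [Finset.card_eq_sum_card_fiberwise hmaps]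
    apply Finset.sum_congr rfl
    intro S' _
    congr 1
    rw [Finset.filter_filter]
  have hcard𝒮 : 𝒮.card = (n - 1).choose k := by
    rw [h𝒮, Finset.card_powersetCard, Finset.card_erase_of_mem (Finset.mem_univ p),
      Finset.card_univ, Fintype.card_fin]
  have htot : (Finset.univ.filter (fun π : Equiv.Perm (Fin n) => π t = p)).card
      = (n - 1).factorial := by
    rw [card_perm_fix t p, Fintype.card_fin]
  have heq : (n - 1).choose k *
      (Finset.univ.filter (fun π : Equiv.Perm (Fin n) => π t = p ∧ A.image π = S)).card
      = (n - 1).factorial := by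
    rw [← htot, hsum, Finset.sum_congr rfl hfib, Finset.sum_const, hcard𝒮, smul_eq_mul]
  have hfact : (n - 1).choose k * (k.factorial * (n - 1 - k).factorial)
      = (n - 1).factorial := by
    rw [← mul_assoc]
    exact Nat.choose_mul_factorial_mul_factorial hkn1
  have hpos : 0 < (n - 1).choose k := Nat.choose_pos hkn1
  exact Nat.eq_of_mul_eq_mul_left hpos (heq.trans hfact.symm)

end FiberCount

section MainAux

variable {n : ℕ}

lemma filter_lt_succ (k : Fin n) :
    (Finset.univ.filter (fun i : Fin n => (i : ℕ) < (k : ℕ) + 1)) =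
      insert k (Finset.univ.filter (fun i : Fin n => (i : ℕ) < (k : ℕ))) := by
  ext i
  simp only [Finset.mem_insert, Finset.mem_filter, Finset.mem_univ, true_and,
    Nat.lt_succ_iff_lt_or_eq]
  rw [← Fin.val_eq_val]
  tauto

lemma p_notin_image (p : Fin n) (π : Equiv.Perm (Fin n)) (k : Fin n) (h3 : π k = p) :
    p ∉ (Finset.univ.filter (fun i : Fin n => (i : ℕ) < (k : ℕ))).image ⇑π := by
  intro hmem
  obtain ⟨i, hi, hip⟩ := Finset.mem_image.mp hmem
  rw [Finset.mem_filter] at hi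
  have : i = k := π.injective (hip.trans h3.symm)
  subst this
  exact lt_irrefl _ hi.2

lemma sum_image_succ (p : Fin n) (w : Fin n → ℕ) (π : Equiv.Perm (Fin n)) (k : Fin n) (h3 : π k = p) :
    ∑ ℓ ∈ (Finset.univ.filter (fun i : Fin n => (i : ℕ) < (k : ℕ) + 1)).image ⇑π, w ℓ
      = w p + ∑ ℓ ∈ (Finset.univ.filter (fun i : Fin n => (i : ℕ) < (k : ℕ))).image ⇑π, w ℓ := by
  rw [filter_lt_succ, Finset.image_insert, h3, Finset.sum_insert (p_notin_image p π k h3)]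

end MainAux

section CoeffLemma

/-- Coefficient extraction for the generating product. -/
lemma coeff_gen_prod {n : ℕ} (T : Finset (Fin n)) (w : Fin n → ℕ) (j k : ℕ) :
    ((∏ ℓ ∈ T, (1 + Polynomial.C Polynomial.X * Polynomial.X ^ (w ℓ) :
        Polynomial (Polynomial ℝ))).coeff j).coeff k
      = ((T.powerset.filter (fun S => S.card = k ∧ ∑ ℓ ∈ S, w ℓ = j)).card : ℝ) := by
  classical
  have hexp : (∏ ℓ ∈ T, (1 + Polynomial.C Polynomial.X * Polynomial.X ^ (w ℓ) :
      Polynomial (Polynomial ℝ)))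
      = ∑ S ∈ T.powerset, Polynomial.C (Polynomial.X ^ S.card) *
          Polynomial.X ^ (∑ ℓ ∈ S, w ℓ) := by
    have h1 : ∀ ℓ ∈ T, (1 + Polynomial.C Polynomial.X * Polynomial.X ^ (w ℓ) :
        Polynomial (Polynomial ℝ))
        = Polynomial.C Polynomial.X * Polynomial.X ^ (w ℓ) + 1 := fun ℓ _ => add_comm _ _
    rw [Finset.prod_congr rfl h1, Finset.prod_add]
    apply Finset.sum_congr rfl
    intro S hS
    rw [Finset.prod_const_one, mul_one, Finset.prod_mul_distrib, Finset.prod_const,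
      Finset.prod_pow_eq_pow_sum, ← Polynomial.C.map_pow]
  rw [hexp, Polynomial.finset_sum_coeff]
  have h2 : ∀ S ∈ T.powerset,
      ((Polynomial.C (Polynomial.X ^ S.card) * Polynomial.X ^ (∑ ℓ ∈ S, w ℓ) :
        Polynomial (Polynomial ℝ)).coeff j).coeff k
      = if S.card = k ∧ ∑ ℓ ∈ S, w ℓ = j then (1 : ℝ) else 0 := by
    intro S _
    rw [Polynomial.coeff_C_mul, Polynomial.coeff_X_pow]
    by_cases hj : j = ∑ ℓ ∈ S, w ℓ
    · rw [if_pos hj, mul_one, Polynomial.coeff_X_pow]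
      by_cases hkc : k = S.card
      · rw [if_pos hkc, if_pos ⟨hkc.symm, hj.symm⟩]
      · rw [if_neg hkc, if_neg (fun h => hkc h.1.symm)]
    · rw [if_neg hj, mul_zero, Polynomial.coeff_zero,
        if_neg (fun h => hj h.2.symm)]
  rw [Polynomial.finset_sum_coeff, Finset.sum_congr rfl h2, Finset.sum_boole]

end CoeffLemma

/-- Cantor, generating-function form: with integer weights `w_ℓ ≥ 1`,
quota `1 ≤ q ≤ w(N)`, and a player `p` with `w_p ≤ q`, the Shapley–Shubik numerator —
the number of permutations `π` of `N` for which there exists `k` with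
`w(S_{k−1}(π)) < q ≤ w(S_k(π))` and `π_k = p` — equals
`Σ_{k=0}^{n−1} k!·(n−1−k)!· Σ_{j=q−w_p}^{q−1} [Y^k X^j] f_p`, where
`f_p = ∏_{ℓ ∈ N \ {p}} (1 + Y·X^{w_ℓ})` is realized in `(ℝ[Y])[X]` with
`Y = Polynomial.C Polynomial.X`, so `[Y^k X^j] f = (f.coeff j).coeff k`. -/
theorem cantor_generating_function (n q : ℕ) (w : Fin n → ℕ) (hw : ∀ ℓ, 1 ≤ w ℓ)
    (hq1 : 1 ≤ q) (hq2 : q ≤ ∑ ℓ, w ℓ) (p : Fin n) (hp : w p ≤ q) :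
    (((Finset.univ : Finset (Equiv.Perm (Fin n))).filter
        (fun π : Equiv.Perm (Fin n) => ∃ k : Fin n,
          (∑ ℓ ∈ (Finset.univ.filter (fun i : Fin n => (i : ℕ) < (k : ℕ))).image (⇑π), w ℓ) < q ∧
          q ≤ ∑ ℓ ∈ (Finset.univ.filter (fun i : Fin n => (i : ℕ) < (k : ℕ) + 1)).image (⇑π), w ℓ ∧
          π k = p)).card : ℝ) =
      ∑ k ∈ Finset.range n, (k.factorial : ℝ) * ((n - 1 - k).factorial : ℝ) *
        ∑ j ∈ Finset.Icc (q - w p) (q - 1),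
          ((∏ ℓ ∈ Finset.univ.erase p,
              (1 + Polynomial.C Polynomial.X * Polynomial.X ^ (w ℓ) :
                Polynomial (Polynomial ℝ))).coeff j).coeff k := by
  classical
  have hn : 0 < n := p.pos
  have hn1 : n - 1 < n := Nat.sub_lt hn one_pos
  -- the predecessor-set map
  set Φ : Equiv.Perm (Fin n) → Finset (Fin n) :=
    fun π => (Finset.univ.filter (fun i : Fin n => (i : ℕ) < ((π.symm p : Fin n) : ℕ))).image ⇑π
    with hΦ
  set G : Finset (Finset (Fin n)) :=
    (Finset.univ.erase p).powerset.filter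
      (fun S => q - w p ≤ ∑ ℓ ∈ S, w ℓ ∧ ∑ ℓ ∈ S, w ℓ ≤ q - 1) with hG
  have hGsub : ∀ S ∈ G, S ⊆ Finset.univ.erase p := by
    intro S hSG
    rw [hG, Finset.mem_filter, Finset.mem_powerset] at hSG
    exact hSG.1
  have hGcard : ∀ S ∈ G, S.card < n := by
    intro S hSG
    calc S.card ≤ (Finset.univ.erase p).card := Finset.card_le_card (hGsub S hSG)
    _ = n - 1 := by rw [Finset.card_erase_of_mem (Finset.mem_univ p), Finset.card_univ,
        Fintype.card_fin]
    _ < n := hn1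
  -- Step A: the pivotality condition is equivalent to `Φ π ∈ G`
  have hPiff : ∀ π : Equiv.Perm (Fin n),
      (∃ k : Fin n,
        (∑ ℓ ∈ (Finset.univ.filter (fun i : Fin n => (i : ℕ) < (k : ℕ))).image (⇑π), w ℓ) < q ∧
        q ≤ ∑ ℓ ∈ (Finset.univ.filter (fun i : Fin n => (i : ℕ) < (k : ℕ) + 1)).image (⇑π), w ℓ ∧
        π k = p) ↔ Φ π ∈ G := by
    intro π
    constructor
    · rintro ⟨k, h1, h2, h3⟩
      have hk : π.symm p = k := by rw [Equiv.symm_apply_eq]; exact h3.symm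
      have hΦπ : Φ π
          = (Finset.univ.filter (fun i : Fin n => (i : ℕ) < (k : ℕ))).image ⇑π := by
        rw [hΦ]; simp only [hk]
      rw [hG, Finset.mem_filter, Finset.mem_powerset, hΦπ]
      refine ⟨?_, ?_, Nat.le_sub_one_of_lt h1⟩
      · intro x hx
        obtain ⟨i, hi, rfl⟩ := Finset.mem_image.mp hx
        refine Finset.mem_erase.mpr ⟨?_, Finset.mem_univ _⟩
        intro hcon
        have : i = k := π.injective (hcon.trans h3.symm)
        subst this
        rw [Finset.mem_filter] at hi
        exact lt_irrefl _ hi.2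
      · rw [sum_image_succ p w π k h3] at h2
        rw [Nat.sub_le_iff_le_add, add_comm]
        exact h2
    · intro hmem
      rw [hG, Finset.mem_filter, Finset.mem_powerset] at hmem
      refine ⟨π.symm p, ?_, ?_, Equiv.apply_symm_apply π p⟩
      · exact lt_of_le_of_lt hmem.2.2 (Nat.sub_lt hq1 one_pos)
      · rw [sum_image_succ p w π (π.symm p) (Equiv.apply_symm_apply π p)]
        have := hmem.2.1
        rw [Nat.sub_le_iff_le_add] at this
        rw [add_comm]
        exact this
  -- Step B: fibers of Φ
  have hfiber : ∀ S ∈ G,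
      (Finset.univ.filter (fun π : Equiv.Perm (Fin n) => Φ π = S)).card
        = S.card.factorial * (n - 1 - S.card).factorial := by
    intro S hSG
    have hlt : S.card < n := hGcard S hSG
    have hfe : (Finset.univ.filter (fun π : Equiv.Perm (Fin n) => Φ π = S))
        = (Finset.univ.filter (fun π : Equiv.Perm (Fin n) => π ⟨S.card, hlt⟩ = p ∧
          ((Finset.univ : Finset (Fin n)).filter (fun i : Fin n => (i : ℕ) < S.card)).image π = S)) := by
      ext π
      simp only [Finset.mem_filter, Finset.mem_univ, true_and]
      constructor
      · intro h
        have hm : ((π.symm p : Fin n) : ℕ) = S.card := by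
          have hc1 : (Φ π).card = ((π.symm p : Fin n) : ℕ) := by
            rw [hΦ]
            simp only
            rw [Finset.card_image_of_injective _ π.injective,
              card_filter_val_lt n _ (π.symm p).isLt.le]
          rw [h] at hc1
          exact hc1.symm
        have ht : (⟨S.card, hlt⟩ : Fin n) = π.symm p := Fin.ext (by rw [hm])
        constructor
        · rw [ht, Equiv.apply_symm_apply]
        · conv_rhs => rw [← h]
          rw [hΦ]
          simp only [hm]
      · rintro ⟨h1, h2⟩
        have hk : π.symm p = ⟨S.card, hlt⟩ := by rw [Equiv.symm_apply_eq]; exact h1.symm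
        rw [hΦ]
        simp only [hk]
        exact h2
    rw [hfe]
    exact fiber_count p S (hGsub S hSG) hlt
  -- Step C: the LHS count
  have hL : ((Finset.univ : Finset (Equiv.Perm (Fin n))).filter
      (fun π : Equiv.Perm (Fin n) => ∃ k : Fin n,
        (∑ ℓ ∈ (Finset.univ.filter (fun i : Fin n => (i : ℕ) < (k : ℕ))).image (⇑π), w ℓ) < q ∧
        q ≤ ∑ ℓ ∈ (Finset.univ.filter (fun i : Fin n => (i : ℕ) < (k : ℕ) + 1)).image (⇑π), w ℓ ∧
        π k = p)).card
      = ∑ S ∈ G, S.card.factorial * (n - 1 - S.card).factorial := by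
    have hLfil : ((Finset.univ : Finset (Equiv.Perm (Fin n))).filter
        (fun π : Equiv.Perm (Fin n) => ∃ k : Fin n,
          (∑ ℓ ∈ (Finset.univ.filter (fun i : Fin n => (i : ℕ) < (k : ℕ))).image (⇑π), w ℓ) < q ∧
          q ≤ ∑ ℓ ∈ (Finset.univ.filter (fun i : Fin n => (i : ℕ) < (k : ℕ) + 1)).image (⇑π), w ℓ ∧
          π k = p))
        = (Finset.univ.filter (fun π : Equiv.Perm (Fin n) => Φ π ∈ G)) :=
      Finset.filter_congr (fun π _ => by
        constructor
        · exact fun h => (hPiff π).mp h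
        · exact fun h => (hPiff π).mpr h)
    rw [hLfil]
    have hmaps : ∀ π ∈ (Finset.univ : Finset (Equiv.Perm (Fin n))).filter
        (fun π => Φ π ∈ G), Φ π ∈ G := by
      intro π hπ
      exact (Finset.mem_filter.mp hπ).2
    rw [Finset.card_eq_sum_card_fiberwise hmaps]
    apply Finset.sum_congr rfl
    intro S hSG
    rw [← hfiber S hSG]
    congr 1
    rw [Finset.filter_filter]
    apply Finset.filter_congr
    intro π _
    constructor
    · rintro ⟨_, h⟩; exact h
    · intro h; exact ⟨h ▸ hSG, h⟩
  -- Step D: rewrite the RHS coefficients and finish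
  have hR : ∀ k j : ℕ,
      ((∏ ℓ ∈ Finset.univ.erase p,
          (1 + Polynomial.C Polynomial.X * Polynomial.X ^ (w ℓ) :
            Polynomial (Polynomial ℝ))).coeff j).coeff k
        = (((Finset.univ.erase p).powerset.filter
            (fun S => S.card = k ∧ ∑ ℓ ∈ S, w ℓ = j)).card : ℝ) :=
    fun k j => coeff_gen_prod (Finset.univ.erase p) w j k
  -- the natural number identity
  have hInner : ∀ k : ℕ,
      ∑ j ∈ Finset.Icc (q - w p) (q - 1),
        ((Finset.univ.erase p).powerset.filter
          (fun S => S.card = k ∧ ∑ ℓ ∈ S, w ℓ = j)).card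
      = (G.filter (fun S => S.card = k)).card := by
    intro k
    have hmaps : ∀ S ∈ G.filter (fun S => S.card = k),
        (∑ ℓ ∈ S, w ℓ) ∈ Finset.Icc (q - w p) (q - 1) := by
      intro S hS
      rw [Finset.mem_filter, hG, Finset.mem_filter] at hS
      exact Finset.mem_Icc.mpr hS.1.2
    rw [Finset.card_eq_sum_card_fiberwise hmaps]
    apply Finset.sum_congr rfl
    intro j hj
    rw [Finset.mem_Icc] at hj
    congr 1
    ext S
    simp only [Finset.mem_filter, hG, Finset.mem_powerset]
    constructor
    · rintro ⟨hsub, hcard, hsum⟩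
      exact ⟨⟨⟨hsub, hsum ▸ hj.1, hsum ▸ hj.2⟩, hcard⟩, hsum⟩
    · rintro ⟨⟨⟨hsub, _⟩, hcard⟩, hsum⟩
      exact ⟨hsub, hcard, hsum⟩
  have hOuter : ∑ S ∈ G, S.card.factorial * (n - 1 - S.card).factorial
      = ∑ k ∈ Finset.range n, k.factorial * (n - 1 - k).factorial
          * (G.filter (fun S => S.card = k)).card := by
    rw [← Finset.sum_fiberwise_of_maps_to
      (fun S hS => Finset.mem_range.mpr (hGcard S hS))
      (fun S => S.card.factorial * (n - 1 - S.card).factorial)]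
    apply Finset.sum_congr rfl
    intro k _
    have hcc : ∀ S ∈ G.filter (fun S => S.card = k),
        S.card.factorial * (n - 1 - S.card).factorial
          = k.factorial * (n - 1 - k).factorial := by
      intro S hS
      rw [(Finset.mem_filter.mp hS).2]
    rw [Finset.sum_congr rfl hcc, Finset.sum_const, smul_eq_mul, mul_comm]
  rw [hL]
  have : ∀ k ∈ Finset.range n, (k.factorial : ℝ) * ((n - 1 - k).factorial : ℝ) *
      ∑ j ∈ Finset.Icc (q - w p) (q - 1),
        ((∏ ℓ ∈ Finset.univ.erase p,
            (1 + Polynomial.C Polynomial.X * Polynomial.X ^ (w ℓ) :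
              Polynomial (Polynomial ℝ))).coeff j).coeff k
      = ((k.factorial * (n - 1 - k).factorial
          * (G.filter (fun S => S.card = k)).card : ℕ) : ℝ) := by
    intro k _
    rw [Finset.sum_congr rfl (fun j _ => hR k j), ← Nat.cast_sum, hInner k]
    push_cast
    ring
  rw [Finset.sum_congr rfl this, ← Nat.cast_sum, ← hOuter]
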